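/- Suppose that for a finite set E of n points in ℝ² and every pair of nonzero reals (α₁, α₂), the number of hinges — triples (R₁, R₂, R₃) ∈ E³ with R₁·R₂ = α₁ and R₂·R₃ = α₂ — is at most H·n², and for every nonzero real α the number of pairs (A,B) ∈ E² with A·B = α is at most S·n^{4/3}. Then for every k ≥ 1 with k ≡ 2 (mod 3) and every k-tuple of nonzero reals (α₁,…,α_k), the number of k-chains — tuples (R₁,…,R_{k+1}) ∈ E^{k+1} with R_j·R_{j+1} = α_j for all 1 ≤ j ≤ k — is at most H^{(k+1)/3}·n^{2(k+1)/3}. -/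

import Mathlib

/-- The standard dot product on ℝ². -/
def dot (A B : ℝ × ℝ) : ℝ := A.1 * B.1 + A.2 * B.2

/-- The set of k-chains of type τ in E: tuples of k+1 points of E whose consecutive
dot products are prescribed by τ. -/
def chains (E : Finset (ℝ × ℝ)) {k : ℕ} (τ : Fin k → ℝ) : Set (Fin (k + 1) → ℝ × ℝ) :=
  {R | (∀ i, R i ∈ E) ∧ ∀ j : Fin k, dot (R j.castSucc) (R j.succ) = τ j}

theorem chains_bound_two_mod_three (E : Finset (ℝ × ℝ)) (H S : ℝ)
    (hH : ∀ α₁ α₂ : ℝ, α₁ ≠ 0 → α₂ ≠ 0 →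
      ({t : (ℝ × ℝ) × (ℝ × ℝ) × (ℝ × ℝ) | t.1 ∈ E ∧ t.2.1 ∈ E ∧ t.2.2 ∈ E ∧
        dot t.1 t.2.1 = α₁ ∧ dot t.2.1 t.2.2 = α₂}.ncard : ℝ) ≤ H * (E.card : ℝ) ^ 2)
    (hS : ∀ α : ℝ, α ≠ 0 →
      ({p : (ℝ × ℝ) × (ℝ × ℝ) | p.1 ∈ E ∧ p.2 ∈ E ∧ dot p.1 p.2 = α}.ncard : ℝ) ≤
        S * (E.card : ℝ) ^ ((4:ℝ)/3))
    (k : ℕ) (hk : 1 ≤ k) (hk3 : k % 3 = 2) (α : Fin k → ℝ) (hα : ∀ j, α j ≠ 0) :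
    ((chains E α).ncard : ℝ) ≤ H ^ ((k + 1) / 3) * (E.card : ℝ) ^ (2 * ((k + 1) / 3)) := by
  set n := E.card with hn
  set m := (k + 1) / 3 with hmdef
  have hk2 : 2 ≤ k := by omega
  have hm : k + 1 = 3 * m := by omega
  have hm1 : 1 ≤ m := by omega
  -- the hinge sets
  set T : Fin m → Set ((ℝ × ℝ) × (ℝ × ℝ) × (ℝ × ℝ)) := fun i =>
    {t | t.1 ∈ E ∧ t.2.1 ∈ E ∧ t.2.2 ∈ E ∧
      dot t.1 t.2.1 = α ⟨3 * i.val, by omega⟩ ∧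
      dot t.2.1 t.2.2 = α ⟨3 * i.val + 1, by omega⟩} with hT
  have hTfin : ∀ i, (T i).Finite := by
    intro i
    apply Set.Finite.subset (E.finite_toSet.prod (E.finite_toSet.prod E.finite_toSet))
    rintro ⟨a, b, c⟩ ⟨h1, h2, h3, -⟩
    exact ⟨h1, h2, h3⟩
  -- the gluing map
  set f : (Fin (k + 1) → ℝ × ℝ) → (Fin m → (ℝ × ℝ) × (ℝ × ℝ) × (ℝ × ℝ)) := fun R i =>
    (R ⟨3 * i.val, by omega⟩, R ⟨3 * i.val + 1, by omega⟩, R ⟨3 * i.val + 2, by omega⟩) with hf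
  have hmaps : ∀ R ∈ chains E α, f R ∈ Set.univ.pi T := by
    rintro R ⟨hRE, hRd⟩ i _
    refine ⟨hRE _, hRE _, hRE _, ?_, ?_⟩
    · exact hRd ⟨3 * i.val, by omega⟩
    · exact hRd ⟨3 * i.val + 1, by omega⟩
  have hinj : Set.InjOn f (chains E α) := by
    intro R _ R' _ h
    funext j
    have hj := j.isLt
    have h3 : j.val % 3 = 0 ∨ j.val % 3 = 1 ∨ j.val % 3 = 2 := by omega
    have hi := congrFun h ⟨j.val / 3, by omega⟩
    simp only [hf, Prod.mk.injEq] at hi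
    obtain ⟨h0, h1, h2⟩ := hi
    rcases h3 with h3 | h3 | h3
    · have : j = ⟨3 * (j.val / 3), by omega⟩ := Fin.ext (show j.val = 3 * (j.val / 3) by omega)
      rw [this]; exact h0
    · have : j = ⟨3 * (j.val / 3) + 1, by omega⟩ := Fin.ext (show j.val = 3 * (j.val / 3) + 1 by omega)
      rw [this]; exact h1
    · have : j = ⟨3 * (j.val / 3) + 2, by omega⟩ := Fin.ext (show j.val = 3 * (j.val / 3) + 2 by omega)
      rw [this]; exact h2
  have hcard : (chains E α).ncard ≤ (Set.univ.pi T).ncard :=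
    Set.ncard_le_ncard_of_injOn f hmaps hinj (Set.Finite.pi hTfin)
  have hpi : (Set.univ.pi T).ncard = ∏ i, (T i).ncard := by
    have e1 : (Set.univ.pi T).ncard = Nat.card (Set.univ.pi T) := rfl
    rw [e1, Nat.card_congr (Equiv.Set.univPi T), Nat.card_pi]
    rfl
  rcases Nat.eq_zero_or_pos n with hn0 | hnpos
  · -- E is empty
    have hE : E = ∅ := Finset.card_eq_zero.mp hn0
    have : chains E α = ∅ := by
      ext R
      simp only [chains, Set.mem_setOf_eq, Set.mem_empty_iff_false, iff_false]
      rintro ⟨hRE, -⟩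
      exact absurd (hRE 0) (by simp [hE])
    rw [this, Set.ncard_empty]
    rw [hn0]
    push_cast
    rw [zero_pow (by omega)]
    simp
  · -- E is nonempty; first H ≥ 0
    have hHn : (0:ℝ) ≤ H := by
      have h0 := hH (α ⟨0, by omega⟩) (α ⟨1, by omega⟩) (hα _) (hα _)
      have hpos : (0:ℝ) < (n:ℝ)^2 := pow_pos (by exact_mod_cast hnpos) 2
      have h0' : (0:ℝ) ≤ H * (n:ℝ)^2 := le_trans (by positivity) h0
      nlinarith
    calc ((chains E α).ncard : ℝ) ≤ ((Set.univ.pi T).ncard : ℝ) := by exact_mod_cast hcard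
      _ = ∏ i : Fin m, ((T i).ncard : ℝ) := by rw [hpi]; push_cast; ring
      _ ≤ ∏ i : Fin m, (H * (n:ℝ)^2) := by
          apply Finset.prod_le_prod
          · intro i _; positivity
          · intro i _
            exact hH _ _ (hα _) (hα _)
      _ = H ^ m * (n:ℝ) ^ (2 * m) := by
          rw [Finset.prod_const, Finset.card_univ, Fintype.card_fin, mul_pow, pow_mul]
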